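/- If B ⊆ V(T_n) is i-left-compressed for i = 1,2, contains k ≥ 1 vertices on the diagonal {v : v1+v2 = n}, and its topmost diagonal vertex is y = (y1, y2) (so y1+y2 = n and y2 is maximal among diagonal members of B), then the vertex boundary of B has size at least n−k+1. -/
import Mathlib


/-- Vertex set of the triangular grid graph `T_n`. -/
def TnV (n : ℕ) : Finset (ℕ × ℕ) :=
  (Finset.range (n+1) ×ˢ Finset.range (n+1)).filter (fun v => v.1 + v.2 ≤ n)

/-- Adjacency in the triangular grid graph. -/
def adj (u v : ℕ × ℕ) : Prop :=
  (v.1 = u.1 + 1 ∧ v.2 = u.2) ∨ (u.1 = v.1 + 1 ∧ u.2 = v.2) ∨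
  (v.2 = u.2 + 1 ∧ v.1 = u.1) ∨ (u.2 = v.2 + 1 ∧ u.1 = v.1) ∨
  (v.1 = u.1 + 1 ∧ u.2 = v.2 + 1) ∨ (u.1 = v.1 + 1 ∧ v.2 = u.2 + 1)

instance : ∀ u v : ℕ × ℕ, Decidable (adj u v) := fun u v => by
  unfold adj; infer_instance

/-- The (exterior) vertex boundary of `A` in `T_n`. -/
def boundary (n : ℕ) (A : Finset (ℕ × ℕ)) : Finset (ℕ × ℕ) :=
  (TnV n).filter (fun v => v ∉ A ∧ ∃ u ∈ A, adj u v)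

/-- The neighborhood `N(A)` of `A` in `T_n`. -/
def nbhd (n : ℕ) (A : Finset (ℕ × ℕ)) : Finset (ℕ × ℕ) :=
  (TnV n).filter (fun v => v ∈ A ∨ ∃ u ∈ A, adj u v)

/-- `sle u v` : `u` comes before (or equals) `v` in the simplicial ordering. -/
def sle (u v : ℕ × ℕ) : Prop :=
  u.1 + u.2 < v.1 + v.2 ∨ (u.1 + u.2 = v.1 + v.2 ∧ v.1 ≤ u.1)

/-- `C` is an initial segment of the simplicial ordering on `V(T_n)`. -/
def IsInitSeg (n : ℕ) (C : Finset (ℕ × ℕ)) : Prop :=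
  C ⊆ TnV n ∧ ∀ v ∈ C, ∀ u ∈ TnV n, sle u v → u ∈ C

/-- `D` is a final segment of the simplicial ordering on `V(T_n)`. -/
def IsFinalSeg (n : ℕ) (D : Finset (ℕ × ℕ)) : Prop :=
  D ⊆ TnV n ∧ ∀ v ∈ D, ∀ u ∈ TnV n, sle v u → u ∈ D

/-- `B` is 1-left-compressed. -/
def LeftComp1 (B : Finset (ℕ × ℕ)) : Prop :=
  ∀ v ∈ B, ∀ w2 < v.2, (v.1, w2) ∈ B

/-- `B` is 2-left-compressed. -/
def LeftComp2 (B : Finset (ℕ × ℕ)) : Prop :=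
  ∀ v ∈ B, ∀ w1 < v.1, (w1, v.2) ∈ B

theorem compressed_diag_boundary_lower (n k : ℕ) (B : Finset (ℕ × ℕ))
    (hB : B ⊆ TnV n) (h1 : LeftComp1 B) (h2 : LeftComp2 B)
    (hk : (B.filter (fun v => v.1 + v.2 = n)).card = k) (hk1 : 1 ≤ k)
    (y : ℕ × ℕ) (hy : y ∈ B) (hydiag : y.1 + y.2 = n)
    (hymax : ∀ v ∈ B, v.1 + v.2 = n → v.2 ≤ y.2)
    (hne : B ≠ TnV n) :
    n + 1 - k ≤ (boundary n B).card := by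
  classical
  obtain ⟨y1, y2⟩ := y
  have hydiag' : y1 + y2 = n := hydiag
  have hymax' : ∀ v ∈ B, v.1 + v.2 = n → v.2 ≤ y2 := hymax
  clear hydiag hymax
  -- full rows among 0..y2 and non-full rows
  have hFullcard : ((Finset.range (y2+1)).filter (fun r => (n - r, r) ∈ B)).card = k := by
    have himg : (B.filter (fun v => v.1 + v.2 = n)).image Prod.snd
        = (Finset.range (y2+1)).filter (fun r => (n - r, r) ∈ B) := by
      ext r
      simp only [Finset.mem_image, Finset.mem_filter, Finset.mem_range]
      constructor
      · rintro ⟨v, ⟨hvB, hvd⟩, rfl⟩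
        have hle : v.2 ≤ y2 := hymax' v hvB hvd
        have hv : (n - v.2, v.2) = v := by
          have : v.1 = n - v.2 := by omega
          exact Prod.ext this.symm rfl
        exact ⟨by omega, hv ▸ hvB⟩
      · rintro ⟨hr, hrB⟩
        exact ⟨(n - r, r), ⟨hrB, by omega⟩, rfl⟩
    have hinj : Set.InjOn (Prod.snd : ℕ × ℕ → ℕ) ↑(B.filter (fun v => v.1 + v.2 = n)) := by
      intro v hv w hw h
      simp only [Finset.coe_filter, Set.mem_setOf_eq] at hv hw
      have : v.1 = w.1 := by omega
      exact Prod.ext this h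
    rw [← himg, Finset.card_image_of_injOn hinj, hk]
  have hky2 : k ≤ y2 + 1 := by
    rw [← hFullcard]
    calc ((Finset.range (y2+1)).filter (fun r => (n - r, r) ∈ B)).card
        ≤ (Finset.range (y2+1)).card := Finset.card_le_card (Finset.filter_subset _ _)
      _ = y2 + 1 := Finset.card_range _
  have hRRsd : (Finset.range (y2+1)).filter (fun r => (n - r, r) ∉ B)
      = Finset.range (y2+1) \ (Finset.range (y2+1)).filter (fun r => (n - r, r) ∈ B) := by
    ext r
    simp only [Finset.mem_filter, Finset.mem_sdiff, Finset.mem_range]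
    tauto
  have hRRowscard : ((Finset.range (y2+1)).filter (fun r => (n - r, r) ∉ B)).card
      = y2 + 1 - k := by
    rw [hRRsd, Finset.card_sdiff_of_subset (Finset.filter_subset _ _), Finset.card_range, hFullcard]
  -- row boundary points
  have hg1mem : ∀ r, r ≤ y2 → (n - r, r) ∉ B → (sInf {s | (s, r) ∉ B}, r) ∈ boundary n B := by
    intro r hr1 hr2
    have hne' : {s | (s, r) ∉ B}.Nonempty := ⟨n - r, hr2⟩
    have hsmem : (sInf {s | (s, r) ∉ B}, r) ∉ B := Nat.sInf_mem hne'
    have hsle : sInf {s | (s, r) ∉ B} ≤ n - r := Nat.sInf_le hr2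
    have hyr : (y1, r) ∈ B := by
      rcases Nat.lt_or_ge r y2 with h | h
      · exact h1 (y1, y2) hy r h
      · have : r = y2 := by omega
        exact this ▸ hy
    have h0r : (0, r) ∈ B := by
      rcases Nat.eq_zero_or_pos y1 with h | h
      · exact h ▸ hyr
      · exact h2 (y1, r) hyr 0 h
    have hspos : 0 < sInf {s | (s, r) ∉ B} := by
      rcases Nat.eq_zero_or_pos (sInf {s | (s, r) ∉ B}) with h | h
      · exact absurd (show (0, r) ∉ B from h ▸ hsmem) (not_not.2 h0r)
      · exact h
    have hprev : (sInf {s | (s, r) ∉ B} - 1, r) ∈ B := by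
      by_contra hc
      have hmem : sInf {s | (s, r) ∉ B} - 1 ∈ {s | (s, r) ∉ B} := hc
      exact absurd (Nat.sInf_le hmem) (by omega)
    have hT : (sInf {s | (s, r) ∉ B}, r) ∈ TnV n := by
      simp only [TnV, Finset.mem_filter, Finset.mem_product, Finset.mem_range]
      refine ⟨⟨?_, ?_⟩, ?_⟩
      · show sInf {s | (s, r) ∉ B} < n + 1; omega
      · show r < n + 1; omega
      · show sInf {s | (s, r) ∉ B} + r ≤ n; omega
    have hadj : adj (sInf {s | (s, r) ∉ B} - 1, r) (sInf {s | (s, r) ∉ B}, r) := by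
      refine Or.inl ⟨?_, rfl⟩
      show sInf {s | (s, r) ∉ B} = sInf {s | (s, r) ∉ B} - 1 + 1
      omega
    exact Finset.mem_filter.2 ⟨hT, hsmem, _, hprev, hadj⟩
  -- column boundary points
  have hg2mem : ∀ j, j < y1 →
      (j, sInf {t | (j, t) ∉ B}) ∈ boundary n B ∧ y2 < sInf {t | (j, t) ∉ B} := by
    intro j hj
    have hdiag_out : (j, n - j) ∉ B := by
      intro hc
      have := hymax' (j, n - j) hc (by show j + (n - j) = n; omega)
      simp only at this
      omega
    have hne' : {t | (j, t) ∉ B}.Nonempty := ⟨n - j, hdiag_out⟩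
    have htmem : (j, sInf {t | (j, t) ∉ B}) ∉ B := Nat.sInf_mem hne'
    have htle : sInf {t | (j, t) ∉ B} ≤ n - j := Nat.sInf_le hdiag_out
    have hjy2 : (j, y2) ∈ B := h2 (y1, y2) hy j hj
    have hty2 : y2 < sInf {t | (j, t) ∉ B} := by
      rcases Nat.lt_or_ge y2 (sInf {t | (j, t) ∉ B}) with h | h
      · exact h
      · rcases Nat.lt_or_ge (sInf {t | (j, t) ∉ B}) y2 with h' | h'
        · exact absurd (h1 (j, y2) hjy2 _ h') htmem
        · have heq : sInf {t | (j, t) ∉ B} = y2 := by omega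
          exact absurd (show (j, y2) ∉ B from heq ▸ htmem) (not_not.2 hjy2)
    have hprev : (j, sInf {t | (j, t) ∉ B} - 1) ∈ B := by
      by_contra hc
      have hmem : sInf {t | (j, t) ∉ B} - 1 ∈ {t | (j, t) ∉ B} := hc
      exact absurd (Nat.sInf_le hmem) (by omega)
    have hT : (j, sInf {t | (j, t) ∉ B}) ∈ TnV n := by
      simp only [TnV, Finset.mem_filter, Finset.mem_product, Finset.mem_range]
      refine ⟨⟨?_, ?_⟩, ?_⟩
      · show j < n + 1; omega
      · show sInf {t | (j, t) ∉ B} < n + 1; omega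
      · show j + sInf {t | (j, t) ∉ B} ≤ n; omega
    have hadj : adj (j, sInf {t | (j, t) ∉ B} - 1) (j, sInf {t | (j, t) ∉ B}) := by
      refine Or.inr (Or.inr (Or.inl ⟨?_, rfl⟩))
      show sInf {t | (j, t) ∉ B} = sInf {t | (j, t) ∉ B} - 1 + 1
      omega
    exact ⟨Finset.mem_filter.2 ⟨hT, htmem, _, hprev, hadj⟩, hty2⟩
  -- assemble
  set S1 : Finset (ℕ × ℕ) :=
    ((Finset.range (y2+1)).filter (fun r => (n - r, r) ∉ B)).image
      (fun r => (sInf {s | (s, r) ∉ B}, r)) with hS1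
  set S2 : Finset (ℕ × ℕ) :=
    (Finset.range y1).image (fun j => (j, sInf {t | (j, t) ∉ B})) with hS2
  have hS1card : S1.card = y2 + 1 - k := by
    rw [hS1, Finset.card_image_of_injOn, hRRowscard]
    intro a _ b _ h
    simpa using congrArg Prod.snd h
  have hS2card : S2.card = y1 := by
    rw [hS2, Finset.card_image_of_injOn, Finset.card_range]
    intro a _ b _ h
    simpa using congrArg Prod.fst h
  have hdisj : Disjoint S1 S2 := by
    rw [Finset.disjoint_left]
    intro a ha hb
    simp only [hS1, hS2, Finset.mem_image, Finset.mem_filter, Finset.mem_range] at ha hb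
    obtain ⟨r, ⟨hr, _⟩, rfl⟩ := ha
    obtain ⟨j, hj, hEq⟩ := hb
    have h2' := (hg2mem j hj).2
    have hsnd : sInf {t | (j, t) ∉ B} = r := by
      simpa using congrArg Prod.snd hEq
    omega
  have hsub : S1 ∪ S2 ⊆ boundary n B := by
    intro a ha
    rcases Finset.mem_union.1 ha with h | h
    · obtain ⟨r, hr, rfl⟩ := Finset.mem_image.1 h
      obtain ⟨hr1, hr2⟩ := Finset.mem_filter.1 hr
      exact hg1mem r (Nat.lt_succ_iff.mp (Finset.mem_range.mp hr1)) hr2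
    · obtain ⟨j, hj, rfl⟩ := Finset.mem_image.1 h
      exact (hg2mem j (Finset.mem_range.1 hj)).1
  have hcard : (S1 ∪ S2).card = (y2 + 1 - k) + y1 := by
    rw [Finset.card_union_of_disjoint hdisj, hS1card, hS2card]
  have hle := Finset.card_le_card hsub
  omega
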